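/- arXiv:1409.4154 — 5 statements merged into one kernel-verified Lean document; each statement's English description precedes it below -/
import Mathlib

section
/- Let p be a prime and k a commutative ring. There exists a map N : 𝕎 k → 𝕎 k such that: (1) N(a·b) = N(a)·N(b) for all a, b and N(1) = 1; (2) frobenius(N(a)) = a^p for all a; and (3) N satisfies the norm ghost formula, i.e. the 0-th ghost component of N(a) equals the 0-th ghost component of a, and for every n the (n+1)-st ghost component of N(a) equals the p-th power of the n-th ghost component of a. -/
open MvPolynomial Finset WittVector

namespace WittNormAux

variable (p : ℕ) [hp : Fact p.Prime]

/-- Target ghost polynomials for the norm map. -/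
noncomputable def t : ℕ → MvPolynomial ℕ ℤ
  | 0 => X 0
  | n + 1 => wittPolynomial p ℤ n ^ p

@[simp] theorem t_zero : t p 0 = X 0 := rfl
@[simp] theorem t_succ (n : ℕ) : t p (n + 1) = wittPolynomial p ℤ n ^ p := rfl

/-- key elementary divisibility: if `a ≡ b mod p^(n+1)` then `a^p ≡ b^p mod p^(n+2)`. -/
theorem pow_dvd_pow_sub_pow {A : Type*} [CommRing A] (a b c : A) (n : ℕ)
    (h : a - b = (p : A) ^ (n + 1) * c) : (p : A) ^ (n + 2) ∣ a ^ p - b ^ p := by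
  have hab : (p : A) ∣ a - b := ⟨(p : A) ^ n * c, by rw [h]; ring⟩
  have e2 : ∀ i ∈ range p, b ^ i * b ^ (p - 1 - i) = b ^ (p - 1) := by
    intro i hi
    rw [← pow_add]
    congr 1
    have := mem_range.mp hi
    omega
  have e : ∑ i ∈ range p, a ^ i * b ^ (p - 1 - i)
      = (∑ i ∈ range p, (a ^ i - b ^ i) * b ^ (p - 1 - i)) + p * b ^ (p - 1) := by
    calc ∑ i ∈ range p, a ^ i * b ^ (p - 1 - i)
        = ∑ i ∈ range p, ((a ^ i - b ^ i) * b ^ (p - 1 - i) + b ^ i * b ^ (p - 1 - i)) := by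
          apply sum_congr rfl; intro i _; ring
      _ = _ := by
          rw [sum_add_distrib, Finset.sum_congr rfl e2, sum_const, card_range, nsmul_eq_mul]
  have hs : (p : A) ∣ ∑ i ∈ range p, a ^ i * b ^ (p - 1 - i) := by
    rw [e]
    refine dvd_add (dvd_sum fun i _ => ?_) (dvd_mul_right _ _)
    exact dvd_mul_of_dvd_left (hab.trans (sub_dvd_pow_sub_pow a b i)) _
  obtain ⟨s, hss⟩ := hs
  rw [← geom_sum₂_mul a b p, hss, h]
  exact ⟨s * c, by ring⟩

/-- divisibility by `p` in `MvPolynomial ℕ ℤ` is detected modulo `p`. -/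
theorem dvd_iff_mu (f : MvPolynomial ℕ ℤ) :
    (p : MvPolynomial ℕ ℤ) ∣ f ↔
      MvPolynomial.map (Int.castRingHom (ZMod p)) f = 0 := by
  have hp' : (p : MvPolynomial ℕ ℤ) = C (p : ℤ) := by
    rw [map_natCast (C : ℤ →+* MvPolynomial ℕ ℤ) p]
  rw [hp', C_dvd_iff_dvd_coeff]
  constructor
  · intro h
    apply MvPolynomial.ext
    intro m
    rw [MvPolynomial.coeff_map, MvPolynomial.coeff_zero]
    exact (ZMod.intCast_zmod_eq_zero_iff_dvd _ p).mpr (h m)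
  · intro h m
    have := congrArg (MvPolynomial.coeff m) h
    rw [MvPolynomial.coeff_map, MvPolynomial.coeff_zero] at this
    exact (ZMod.intCast_zmod_eq_zero_iff_dvd _ p).mp this

theorem aeval_pow_eq (g : MvPolynomial ℕ (ZMod p)) :
    aeval (fun i => (X i : MvPolynomial ℕ (ZMod p)) ^ p) g = g ^ p := by
  induction g using MvPolynomial.induction_on with
  | C a =>
      rw [aeval_C, algebraMap_eq, ← map_pow, ZMod.pow_card]
  | add f g hf hg => rw [map_add, hf, hg, add_pow_char]
  | mul_X f i hf => rw [map_mul, aeval_X, hf, mul_pow]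

theorem mu_aeval_pow (f : MvPolynomial ℕ ℤ) :
    MvPolynomial.map (Int.castRingHom (ZMod p)) (aeval (fun i => X i ^ p) f)
      = aeval (fun i => (X i : MvPolynomial ℕ (ZMod p)) ^ p)
          (MvPolynomial.map (Int.castRingHom (ZMod p)) f) := by
  induction f using MvPolynomial.induction_on with
  | C a => simp [aeval_C, map_C]
  | add f g hf hg => simp only [map_add, hf, hg]
  | mul_X f i hf => simp only [map_mul, map_pow, map_X, aeval_X, hf]

/-- `X ↦ X^p` is a Frobenius lift on `MvPolynomial ℕ ℤ`. -/
theorem frob_lift_dvd (f : MvPolynomial ℕ ℤ) :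
    (p : MvPolynomial ℕ ℤ) ∣ aeval (fun i => X i ^ p) f - f ^ p := by
  rw [dvd_iff_mu, map_sub, mu_aeval_pow, aeval_pow_eq, map_pow, sub_self]

theorem aeval_aeval {k : Type*} [CommRing k] (h : ℕ → k) (g : ℕ → MvPolynomial ℕ ℤ)
    (q : MvPolynomial ℕ ℤ) :
    aeval h (aeval g q) = aeval (fun i => aeval h (g i)) q := by
  induction q using MvPolynomial.induction_on with
  | C a => simp
  | add f g hf hg => simp only [map_add, hf, hg]
  | mul_X f i hf => simp only [map_mul, aeval_X, hf]

theorem ringHom_aeval {k k' : Type*} [CommRing k] [CommRing k'] (f : k →+* k') (h : ℕ → k)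
    (q : MvPolynomial ℕ ℤ) :
    f (aeval h q) = aeval (fun i => f (h i)) q := by
  induction q using MvPolynomial.induction_on with
  | C a => simp
  | add g g' hg hg' => simp only [map_add, hg, hg']
  | mul_X g i hg => simp only [map_mul, hg, aeval_X]

theorem aeval_witt_eq {k : Type*} [CommRing k] (g : ℕ → k) (m : ℕ) :
    aeval g (wittPolynomial p ℤ m) = ∑ i ∈ range (m + 1), (p : k) ^ i * g i ^ p ^ (m - i) := by
  rw [wittPolynomial_eq_sum_C_mul_X_pow, map_sum]
  apply sum_congr rfl
  intro i _
  simp only [map_mul, map_pow, aeval_X, aeval_C, algebraMap_int_eq, eq_intCast, map_natCast]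

theorem aeval_witt_congr {k : Type*} [CommRing k] (g₁ g₂ : ℕ → k) (m : ℕ)
    (h : ∀ i ≤ m, g₁ i = g₂ i) :
    aeval g₁ (wittPolynomial p ℤ m) = aeval g₂ (wittPolynomial p ℤ m) := by
  rw [aeval_witt_eq, aeval_witt_eq]
  apply sum_congr rfl
  intro i hi
  rw [h i (Nat.lt_succ_iff.mp (mem_range.mp hi))]

theorem aeval_pow_witt (m : ℕ) :
    aeval (fun i => (X i : MvPolynomial ℕ ℤ) ^ p) (wittPolynomial p ℤ m)
      = wittPolynomial p ℤ (m + 1) - (p : MvPolynomial ℕ ℤ) ^ (m + 1) * X (m + 1) := by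
  have h1 : aeval (fun i => (X i : MvPolynomial ℕ ℤ) ^ p) (wittPolynomial p ℤ m)
      = ∑ i ∈ range (m + 1), (p : MvPolynomial ℕ ℤ) ^ i * X i ^ p ^ (m + 1 - i) := by
    erw [aeval_witt_eq]
    apply sum_congr rfl
    intro i hi
    rw [← pow_mul]
    congr 2
    rw [← pow_succ']
    congr 1
    have := mem_range.mp hi
    omega
  have h2 : aeval (X : ℕ → MvPolynomial ℕ ℤ) (wittPolynomial p ℤ (m + 1))
      = ∑ i ∈ range (m + 2), (p : MvPolynomial ℕ ℤ) ^ i * X i ^ p ^ (m + 1 - i) :=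
    aeval_witt_eq p X (m + 1)
  rw [aeval_X_left_apply] at h2
  rw [h1, h2,
    Finset.sum_range_succ (fun i => (p : MvPolynomial ℕ ℤ) ^ i * X i ^ p ^ (m + 1 - i)) (m + 1),
    Nat.sub_self, pow_zero, pow_one]
  ring

/-- Dwork condition for the target ghost components. -/
theorem t_dvd (n : ℕ) :
    (p : MvPolynomial ℕ ℤ) ^ (n + 1) ∣ t p (n + 1) - aeval (fun i => X i ^ p) (t p n) := by
  cases n with
  | zero =>
      rw [t_succ, t_zero, wittPolynomial_zero, aeval_X]
      simp only [sub_self, dvd_zero]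
  | succ m =>
      rw [t_succ, t_succ, map_pow, aeval_pow_witt]
      exact pow_dvd_pow_sub_pow p _ _ (X (m + 1)) m (by ring)

theorem key_dvd (n : ℕ) (g : ℕ → MvPolynomial ℕ ℤ)
    (hg : aeval g (wittPolynomial p ℤ n) = t p n) :
    (p : MvPolynomial ℕ ℤ) ^ (n + 1) ∣
      t p (n + 1) - ∑ i ∈ range (n + 1), (p : MvPolynomial ℕ ℤ) ^ i * g i ^ p ^ (n + 1 - i) := by
  have h2 : (p : MvPolynomial ℕ ℤ) ^ (n + 1) ∣
      aeval (fun i => X i ^ p) (t p n)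
        - ∑ i ∈ range (n + 1), (p : MvPolynomial ℕ ℤ) ^ i * g i ^ p ^ (n + 1 - i) := by
    erw [← hg, aeval_aeval (fun i => (X i : MvPolynomial ℕ ℤ) ^ p) g
      (wittPolynomial p ℤ n)]
    rw [aeval_witt_eq, ← sum_sub_distrib]
    apply dvd_sum
    intro i hi
    have hi' : i ≤ n := Nat.lt_succ_iff.mp (mem_range.mp hi)
    have e : g i ^ p ^ (n + 1 - i) = (g i ^ p) ^ p ^ (n - i) := by
      rw [← pow_mul]
      congr 1
      rw [← pow_succ']
      congr 1
      omega
    rw [e, ← mul_sub]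
    have hd := dvd_sub_pow_of_dvd_sub (frob_lift_dvd p (g i)) (n - i)
    have : (p : MvPolynomial ℕ ℤ) ^ (n + 1) = (p : MvPolynomial ℕ ℤ) ^ i *
        (p : MvPolynomial ℕ ℤ) ^ (n - i + 1) := by
      rw [← pow_add]
      congr 1
      omega
    rw [this]
    exact mul_dvd_mul_left _ hd
  have h1 := t_dvd p n
  have := dvd_add h1 h2
  rwa [sub_add_sub_cancel] at this

/-- Recursive construction of the coefficients of the universal norm. -/
noncomputable def bb : (n : ℕ) →
    { g : ℕ → MvPolynomial ℕ ℤ // ∀ m ≤ n, aeval g (wittPolynomial p ℤ m) = t p m }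
  | 0 =>
    ⟨fun _ => X 0, by
      intro m hm
      have : m = 0 := Nat.le_zero.mp hm
      subst this
      rw [wittPolynomial_zero, aeval_X, t_zero]⟩
  | n + 1 =>
    let g := (bb n).1
    let c := Classical.choose (key_dvd p n g ((bb n).2 n le_rfl))
    have hc : t p (n + 1) - ∑ i ∈ range (n + 1),
          (p : MvPolynomial ℕ ℤ) ^ i * g i ^ p ^ (n + 1 - i)
        = (p : MvPolynomial ℕ ℤ) ^ (n + 1) * c :=
      Classical.choose_spec (key_dvd p n g ((bb n).2 n le_rfl))
    ⟨Function.update g (n + 1) c, by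
      intro m hm
      rcases Nat.lt_succ_iff_lt_or_eq.mp (Nat.lt_succ_of_le hm) with hm' | hm'
      · have hm'' : m ≤ n := Nat.lt_succ_iff.mp hm'
        have hcong : ∀ i ≤ m, Function.update g (n + 1) c i = g i := by
          intro i hi
          exact Function.update_of_ne (by omega) _ _
        exact (aeval_witt_congr p _ g m hcong).trans ((bb n).2 m hm'')
      · subst hm'
        erw [aeval_witt_eq, sum_range_succ, Nat.sub_self, pow_zero, pow_one,
          Function.update_self]
        have e : ∀ i ∈ range (n + 1),
            (p : MvPolynomial ℕ ℤ) ^ i * Function.update g (n + 1) c i ^ p ^ (n + 1 - i)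
              = (p : MvPolynomial ℕ ℤ) ^ i * g i ^ p ^ (n + 1 - i) := by
          intro i hi
          rw [Function.update_of_ne (show i ≠ n + 1 by have := mem_range.mp hi; omega) c g]
        rw [sum_congr rfl e]
        linear_combination -hc⟩

/-- Coefficient polynomials of the universal norm. -/
noncomputable def bSeq (n : ℕ) : MvPolynomial ℕ ℤ := (bb p n).1 n

theorem bb_agree : ∀ n m, m ≤ n → (bb p n).1 m = bSeq p m := by
  intro n
  induction n with
  | zero =>
      intro m hm
      have : m = 0 := Nat.le_zero.mp hm
      subst this; rfl
  | succ n ih =>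
      intro m hm
      rcases Nat.lt_succ_iff_lt_or_eq.mp (Nat.lt_succ_of_le hm) with hm' | hm'
      · have hm'' : m ≤ n := Nat.lt_succ_iff.mp hm'
        have : (bb p (n + 1)).1 m = (bb p n).1 m := by
          show (Function.update (bb p n).1 (n + 1) _) m = _
          rw [Function.update_of_ne (by omega)]
        rw [this, ih m hm'']
      · subst hm'; rfl

theorem ghost_bSeq (n : ℕ) : aeval (bSeq p) (wittPolynomial p ℤ n) = t p n := by
  erw [aeval_witt_congr p (bSeq p) ((bb p n).1) n (fun i hi => (bb_agree p n i hi).symm)]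
  exact (bb p n).2 n le_rfl

variable {k : Type*} [CommRing k]

/-- The norm map on Witt vectors. -/
noncomputable def N (a : WittVector p k) : WittVector p k :=
  WittVector.mk p fun n => aeval a.coeff (bSeq p n)

theorem ghost_N (a : WittVector p k) (n : ℕ) :
    ghostComponent n (N p a) = aeval a.coeff (t p n) := by
  rw [ghostComponent_apply]
  show aeval (fun m => aeval a.coeff (bSeq p m)) (wittPolynomial p ℤ n) = _
  rw [← aeval_aeval a.coeff (bSeq p) (wittPolynomial p ℤ n), ghost_bSeq]

theorem ghost_N_zero (a : WittVector p k) :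
    ghostComponent 0 (N p a) = ghostComponent 0 a := by
  rw [ghost_N, ghostComponent_apply, t_zero, wittPolynomial_zero, aeval_X]

theorem ghost_N_succ (a : WittVector p k) (n : ℕ) :
    ghostComponent (n + 1) (N p a) = ghostComponent n a ^ p := by
  rw [ghost_N, ghostComponent_apply, t_succ, map_pow]

theorem N_map {k' : Type*} [CommRing k'] (f : k →+* k') (a : WittVector p k) :
    WittVector.map f (N p a) = N p (WittVector.map f a) := by
  ext n
  rw [map_coeff]
  show f (aeval a.coeff (bSeq p n)) = aeval (WittVector.map f a).coeff (bSeq p n)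
  have hcoeff : (WittVector.map f a).coeff = fun m => f (a.coeff m) := by
    funext m; rw [map_coeff]
  rw [hcoeff]
  exact ringHom_aeval f a.coeff (bSeq p n)

theorem ghost_map_nat {k' : Type*} [CommRing k'] (f : k →+* k') (a : WittVector p k) (n : ℕ) :
    ghostComponent n (WittVector.map f a) = f (ghostComponent n a) := by
  rw [ghostComponent_apply, ghostComponent_apply]
  have hcoeff : (WittVector.map f a).coeff = fun m => f (a.coeff m) := by
    funext m; rw [map_coeff]
  rw [hcoeff]
  exact (ringHom_aeval f a.coeff (wittPolynomial p ℤ n)).symm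

theorem frobenius_map {k' : Type*} [CommRing k'] (f : k →+* k') (a : WittVector p k) :
    WittVector.map f (WittVector.frobenius a) = WittVector.frobenius (WittVector.map f a) := by
  ext n
  rw [map_coeff, coeff_frobenius, coeff_frobenius]
  have hcoeff : (WittVector.map f a).coeff = fun m => f (a.coeff m) := by
    funext m; rw [map_coeff]
  rw [hcoeff]
  exact ringHom_aeval f a.coeff (frobeniusPoly p n)

/-- Ghost components are jointly injective over the universal base ring. -/
theorem ghost_inj (x y : WittVector p (MvPolynomial (Bool × ℕ) ℤ))
    (h : ∀ n, ghostComponent n x = ghostComponent n y) : x = y := by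
  have hι : Function.Injective
      (MvPolynomial.map (Int.castRingHom ℚ) :
        MvPolynomial (Bool × ℕ) ℤ →+* MvPolynomial (Bool × ℕ) ℚ) :=
    MvPolynomial.map_injective _ Int.cast_injective
  apply WittVector.map_injective _ hι
  letI : Invertible (p : ℚ) :=
    invertibleOfNonzero (by exact_mod_cast hp.out.ne_zero)
  apply (WittVector.ghostMap.bijective_of_invertible p (MvPolynomial (Bool × ℕ) ℚ)).injective
  funext n
  rw [ghostMap_apply, ghostMap_apply, ghost_map_nat, ghost_map_nat, h]

theorem N_mul_univ (x y : WittVector p (MvPolynomial (Bool × ℕ) ℤ)) :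
    N p (x * y) = N p x * N p y := by
  apply ghost_inj p
  intro n
  cases n with
  | zero =>
      rw [ghost_N_zero, map_mul, map_mul, ghost_N_zero, ghost_N_zero]
  | succ m =>
      rw [ghost_N_succ, map_mul, map_mul, ghost_N_succ, ghost_N_succ, mul_pow]

theorem N_one_univ : N p (1 : WittVector p (MvPolynomial (Bool × ℕ) ℤ)) = 1 := by
  apply ghost_inj p
  intro n
  cases n with
  | zero => rw [ghost_N_zero]
  | succ m => rw [ghost_N_succ, map_one, map_one, one_pow]

theorem frob_N_univ (x : WittVector p (MvPolynomial (Bool × ℕ) ℤ)) :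
    WittVector.frobenius (N p x) = x ^ p := by
  apply ghost_inj p
  intro n
  rw [ghostComponent_frobenius, ghost_N_succ, map_pow]

end WittNormAux

/-- There exists a norm map `N : 𝕎 k → 𝕎 k` on `p`-typical Witt vectors which is
multiplicative, satisfies `frobenius (N a) = a ^ p`, and is given on ghost components by
`w₀(N a) = w₀(a)` and `w_{n+1}(N a) = w_n(a) ^ p`. -/
theorem witt_norm_exists (p : ℕ) [hp : Fact p.Prime] (k : Type*) [CommRing k] :
    ∃ N : WittVector p k → WittVector p k,
      (∀ a b : WittVector p k, N (a * b) = N a * N b) ∧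
      N 1 = 1 ∧
      (∀ a : WittVector p k, WittVector.frobenius (N a) = a ^ p) ∧
      (∀ a : WittVector p k,
        WittVector.ghostComponent 0 (N a) = WittVector.ghostComponent 0 a) ∧
      (∀ (a : WittVector p k) (n : ℕ),
        WittVector.ghostComponent (n + 1) (N a) = WittVector.ghostComponent n a ^ p) := by
  classical
  refine ⟨WittNormAux.N p, ?_, ?_, ?_, fun a => WittNormAux.ghost_N_zero p a,
    fun a n => WittNormAux.ghost_N_succ p a n⟩
  · intro a b
    set f : MvPolynomial (Bool × ℕ) ℤ →+* k :=
      (MvPolynomial.aeval (fun s : Bool × ℕ => if s.1 then a.coeff s.2 else b.coeff s.2)).toRingHom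
      with hf
    set xU : WittVector p (MvPolynomial (Bool × ℕ) ℤ) :=
      WittVector.mk p (fun n => MvPolynomial.X (true, n)) with hxU
    set yU : WittVector p (MvPolynomial (Bool × ℕ) ℤ) :=
      WittVector.mk p (fun n => MvPolynomial.X (false, n)) with hyU
    have hx : WittVector.map f xU = a := by
      ext n
      rw [WittVector.map_coeff]
      simp [hf, hxU, WittVector.coeff_mk]
    have hy : WittVector.map f yU = b := by
      ext n
      rw [WittVector.map_coeff]
      simp [hf, hyU, WittVector.coeff_mk]
    calc WittNormAux.N p (a * b)
        = WittNormAux.N p (WittVector.map f (xU * yU)) := by rw [map_mul, hx, hy]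
      _ = WittVector.map f (WittNormAux.N p (xU * yU)) := (WittNormAux.N_map p f _).symm
      _ = WittVector.map f (WittNormAux.N p xU * WittNormAux.N p yU) := by
          rw [WittNormAux.N_mul_univ]
      _ = WittVector.map f (WittNormAux.N p xU) * WittVector.map f (WittNormAux.N p yU) := by
          rw [map_mul]
      _ = WittNormAux.N p a * WittNormAux.N p b := by
          rw [WittNormAux.N_map, WittNormAux.N_map, hx, hy]
  · set f : MvPolynomial (Bool × ℕ) ℤ →+* k :=
      (MvPolynomial.aeval (fun _ : Bool × ℕ => (0 : k))).toRingHom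
    calc WittNormAux.N p (1 : WittVector p k)
        = WittNormAux.N p (WittVector.map f 1) := by rw [map_one]
      _ = WittVector.map f (WittNormAux.N p 1) := (WittNormAux.N_map p f _).symm
      _ = WittVector.map f 1 := by rw [WittNormAux.N_one_univ]
      _ = 1 := map_one _
  · intro a
    set f : MvPolynomial (Bool × ℕ) ℤ →+* k :=
      (MvPolynomial.aeval (fun s : Bool × ℕ => a.coeff s.2)).toRingHom with hf
    set xU : WittVector p (MvPolynomial (Bool × ℕ) ℤ) :=
      WittVector.mk p (fun n => MvPolynomial.X (true, n)) with hxU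
    have hx : WittVector.map f xU = a := by
      ext n
      rw [WittVector.map_coeff]
      simp [hf, hxU, WittVector.coeff_mk]
    calc WittVector.frobenius (WittNormAux.N p a)
        = WittVector.frobenius (WittNormAux.N p (WittVector.map f xU)) := by rw [hx]
      _ = WittVector.frobenius (WittVector.map f (WittNormAux.N p xU)) := by
          rw [WittNormAux.N_map]
      _ = WittVector.map f (WittVector.frobenius (WittNormAux.N p xU)) :=
          (WittNormAux.frobenius_map p f _).symm
      _ = WittVector.map f (xU ^ p) := by rw [WittNormAux.frob_N_univ]
      _ = a ^ p := by rw [map_pow, hx]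
end

section
/- Let p be a prime and k a commutative ring in which p is a nonzerodivisor. Let N : 𝕎 k → 𝕎 k satisfy the norm ghost formula (the 0-th ghost component of N(a) equals the 0-th ghost component of a, and for every n the (n+1)-st ghost component of N(a) equals the p-th power of the n-th ghost component of a). Then for all a, b ∈ 𝕎 k: N(a + b) = N(a) + N(b) + Σ_{i=1}^{p-1} (C(p,i)/p) · V(a^i · b^{p-i}), where C(p,i)/p ∈ ℕ is the integer (1/p)·(p choose i) and V is the Verschiebung. -/
open WittVector Finset

private lemma witt_pow_reg {p : ℕ} {k : Type*} [CommRing k]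
    (hreg : ∀ x : k, (p : k) * x = 0 → x = 0) :
    ∀ (n : ℕ) (x : k), (p : k) ^ n * x = 0 → x = 0 := by
  intro n
  induction n with
  | zero => intro x hx; simpa using hx
  | succ n ih =>
    intro x hx
    apply hreg
    apply ih
    rw [← mul_assoc, ← pow_succ]
    exact hx

private lemma witt_ghost_eq_zero {p : ℕ} [hp : Fact p.Prime] {k : Type*} [CommRing k]
    (hreg : ∀ x : k, (p : k) * x = 0 → x = 0)
    (z : WittVector p k) (h : ∀ n, WittVector.ghostComponent n z = 0) : z = 0 := by
  ext n
  induction n using Nat.strong_induction_on with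
  | _ n ih =>
    have hn := h n
    rw [ghostComponent_apply, aeval_wittPolynomial] at hn
    rw [Finset.sum_range_succ] at hn
    have hzero : ∀ i ∈ Finset.range n, (p : k) ^ i * z.coeff i ^ p ^ (n - i) = 0 := by
      intro i hi
      rw [Finset.mem_range] at hi
      rw [ih i hi, WittVector.zero_coeff, zero_pow (pow_ne_zero _ hp.out.ne_zero), mul_zero]
    rw [Finset.sum_eq_zero hzero, zero_add, Nat.sub_self, pow_zero, pow_one] at hn
    have := witt_pow_reg hreg n _ hn
    simpa using this

private lemma witt_ghost_inj {p : ℕ} [hp : Fact p.Prime] {k : Type*} [CommRing k]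
    (hreg : ∀ x : k, (p : k) * x = 0 → x = 0)
    (x y : WittVector p k) (h : ∀ n, WittVector.ghostComponent n x = WittVector.ghostComponent n y) :
    x = y := by
  have : x - y = 0 := by
    apply witt_ghost_eq_zero hreg
    intro n
    rw [map_sub, h n, sub_self]
  exact sub_eq_zero.mp this

/-- Additivity defect of the norm: if `p` is a nonzerodivisor in `k` and
`N : 𝕎 k → 𝕎 k` satisfies the norm ghost formula, then
`N (a + b) = N a + N b + ∑_{i=1}^{p-1} (C(p,i)/p) • V (a^i * b^(p-i))`. -/
theorem witt_norm_add (p : ℕ) [hp : Fact p.Prime] (k : Type*) [CommRing k]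
    (hreg : ∀ x : k, (p : k) * x = 0 → x = 0)
    (N : WittVector p k → WittVector p k)
    (hN0 : ∀ a : WittVector p k,
      WittVector.ghostComponent 0 (N a) = WittVector.ghostComponent 0 a)
    (hNS : ∀ (a : WittVector p k) (n : ℕ),
      WittVector.ghostComponent (n + 1) (N a) = WittVector.ghostComponent n a ^ p)
    (a b : WittVector p k) :
    N (a + b) = N a + N b +
      ∑ i ∈ Finset.Ico 1 p,
        (p.choose i / p) • WittVector.verschiebung (a ^ i * b ^ (p - i)) := by
  apply witt_ghost_inj hreg
  intro n
  cases n with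
  | zero =>
    rw [hN0, map_add, map_add, map_add, hN0, hN0, map_sum]
    have : ∀ i ∈ Finset.Ico 1 p,
        WittVector.ghostComponent (p := p) 0 ((p.choose i / p) • WittVector.verschiebung (a ^ i * b ^ (p - i))) = 0 := by
      intro i _
      rw [map_nsmul, WittVector.ghostComponent_zero_verschiebung, smul_zero]
    rw [Finset.sum_eq_zero this, add_zero]
  | succ n =>
    simp only [map_add, map_sum, hNS]
    have hterm : ∀ i ∈ Finset.Ico 1 p,
        WittVector.ghostComponent (p := p) (n + 1) ((p.choose i / p) • WittVector.verschiebung (a ^ i * b ^ (p - i)))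
          = (p.choose i : k) * (WittVector.ghostComponent n a ^ i * WittVector.ghostComponent n b ^ (p - i)) := by
      intro i hi
      rw [Finset.mem_Ico] at hi
      rw [map_nsmul, WittVector.ghostComponent_verschiebung, map_mul, map_pow, map_pow,
        nsmul_eq_mul, ← mul_assoc]
      congr 1
      rw [← Nat.cast_mul, Nat.div_mul_cancel (hp.out.dvd_choose_self (by omega) hi.2)]
    rw [Finset.sum_congr rfl hterm]
    rw [add_pow]
    set A := WittVector.ghostComponent (p := p) n a
    set B := WittVector.ghostComponent (p := p) n b
    rw [Finset.sum_range_succ, Nat.sub_self, pow_zero, Nat.choose_self, Nat.cast_one, mul_one, mul_one]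
    rw [Finset.range_eq_Ico, Finset.sum_eq_sum_Ico_succ_bot hp.out.pos]
    rw [pow_zero, Nat.sub_zero, Nat.choose_zero_right, Nat.cast_one, mul_one, one_mul]
    have hs : ∑ i ∈ Finset.Ico (0 + 1) p, A ^ i * B ^ (p - i) * (p.choose i : k)
        = ∑ i ∈ Finset.Ico 1 p, (p.choose i : k) * (A ^ i * B ^ (p - i)) :=
      Finset.sum_congr (by norm_num) (fun i _ => by ring)
    rw [hs]
    ring
end

section
/- Let k be a commutative ring in which 2 is a nonzerodivisor, and let N : 𝕎 k → 𝕎 k (2-typical Witt vectors) satisfy the norm ghost formula (the 0-th ghost component of N(a) equals the 0-th ghost component of a, and for every n the (n+1)-st ghost component of N(a) equals the square of the n-th ghost component of a). Then for all a ∈ 𝕎 k: N(a) + N(−a) = V(a²), where V is the Verschiebung. -/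
open WittVector

private lemma ghost_inj_two (k : Type*) [CommRing k]
    (hreg : ∀ x : k, (2 : k) * x = 0 → x = 0)
    (x y : WittVector 2 k)
    (h : ∀ n, WittVector.ghostComponent n x = WittVector.ghostComponent n y) :
    x = y := by
  ext n
  induction n using Nat.strong_induction_on with
  | _ n ih =>
    have hn := h n
    rw [WittVector.ghostComponent_apply, WittVector.ghostComponent_apply,
      aeval_wittPolynomial, aeval_wittPolynomial, Finset.sum_range_succ,
      Finset.sum_range_succ] at hn
    push_cast at hn
    have hsum : ∑ i ∈ Finset.range n, (2 : k) ^ i * x.coeff i ^ 2 ^ (n - i)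
        = ∑ i ∈ Finset.range n, (2 : k) ^ i * y.coeff i ^ 2 ^ (n - i) := by
      refine Finset.sum_congr rfl fun i hi => ?_
      rw [ih i (Finset.mem_range.mp hi)]
    rw [hsum, Nat.sub_self, pow_zero, pow_one, pow_one] at hn
    have h2 : (2 : k) ^ n * (x.coeff n - y.coeff n) = 0 := by
      rw [mul_sub, sub_eq_zero]
      exact add_left_cancel hn
    have key : ∀ (m : ℕ) (c : k), (2:k) ^ m * c = 0 → c = 0 := by
      intro m
      induction m with
      | zero => intro c hc; simpa using hc
      | succ j ihj =>
        intro c hc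
        apply ihj
        apply hreg
        rw [pow_succ, mul_comm ((2:k)^j) 2, mul_assoc] at hc
        exact hc
    exact sub_eq_zero.mp (key n _ h2)

/-- For `2`-typical Witt vectors over a ring in which `2` is a nonzerodivisor, any map
`N` satisfying the norm ghost formula satisfies `N a + N (-a) = V (a ^ 2)`. -/
theorem witt_norm_two (k : Type*) [CommRing k]
    (hreg : ∀ x : k, (2 : k) * x = 0 → x = 0)
    (N : WittVector 2 k → WittVector 2 k)
    (hN0 : ∀ a : WittVector 2 k,
      WittVector.ghostComponent 0 (N a) = WittVector.ghostComponent 0 a)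
    (hNS : ∀ (a : WittVector 2 k) (n : ℕ),
      WittVector.ghostComponent (n + 1) (N a) = WittVector.ghostComponent n a ^ 2)
    (a : WittVector 2 k) :
    N a + N (-a) = WittVector.verschiebung (a ^ 2) := by
  apply ghost_inj_two k hreg
  intro n
  cases n with
  | zero =>
    simp [hN0, WittVector.ghostComponent_zero_verschiebung]
  | succ m =>
    rw [map_add, hNS, hNS, WittVector.ghostComponent_verschiebung, map_pow, map_neg]
    push_cast
    ring
end

section
/- Let p be a prime and k an integral domain containing a primitive p-th root of unity ξ. Let N : 𝕎 k → 𝕎 k satisfy the norm ghost formula (the 0-th ghost component of N(a) equals the 0-th ghost component of a, and for every n the (n+1)-st ghost component of N(a) equals the p-th power of the n-th ghost component of a). Then for every a ∈ 𝕎 k: Σ_{i=0}^{p-1} N(τ(ξ)^i · a) = V(a^p), where τ(ξ) is the Teichmüller lift of ξ and V is the Verschiebung. -/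
lemma ghostComponent_map_aux (p : ℕ) [Fact p.Prime] {R S : Type*} [CommRing R] [CommRing S]
    (f : R →+* S) (x : WittVector p R) (n : ℕ) :
    WittVector.ghostComponent n (WittVector.map f x) = f (WittVector.ghostComponent n x) := by
  simp only [WittVector.ghostComponent_apply, MvPolynomial.aeval_def]
  rw [MvPolynomial.eval₂_comp_left f]
  congr 1
  exact RingHom.ext_int _ _

/-- If `k` is an integral domain containing a primitive `p`-th root of unity `ξ` and
`N : 𝕎 k → 𝕎 k` satisfies the norm ghost formula, then
`∑_{i=0}^{p-1} N (τ(ξ)^i * a) = V (a ^ p)`. -/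
theorem witt_norm_root_of_unity_sum (p : ℕ) [hp : Fact p.Prime]
    (k : Type*) [CommRing k] [IsDomain k] (ξ : k) (hξ : IsPrimitiveRoot ξ p)
    (N : WittVector p k → WittVector p k)
    (hN0 : ∀ a : WittVector p k,
      WittVector.ghostComponent 0 (N a) = WittVector.ghostComponent 0 a)
    (hNS : ∀ (a : WittVector p k) (n : ℕ),
      WittVector.ghostComponent (n + 1) (N a) = WittVector.ghostComponent n a ^ p)
    (a : WittVector p k) :
    ∑ i ∈ Finset.range p, N (WittVector.teichmuller p ξ ^ i * a) =
      WittVector.verschiebung (a ^ p) := by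
  -- First: (p : k) ≠ 0
  have hp1 : 1 < p := hp.1.one_lt
  have hpk : (p : k) ≠ 0 := by
    intro h
    have hchar : CharP k (ringChar k) := ringChar.charP k
    have hdvd : ringChar k ∣ p := (ringChar.spec k p).mp (by exact_mod_cast h)
    have : ringChar k = p := by
      rcases (Nat.Prime.eq_one_or_self_of_dvd hp.1 _ hdvd) with h1 | h1
      · exact absurd h1 (CharP.ringChar_ne_one)
      · exact h1
    rw [this] at hchar
    -- In char p, ξ ^ p = 1 implies ξ = 1
    have hxi1 : ξ = 1 := by
      have hfrob : (ξ - 1) ^ p = ξ ^ p - 1 ^ p := by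
        haveI : ExpChar k p := ExpChar.prime hp.1
        exact sub_pow_expChar ξ 1
      rw [hξ.pow_eq_one, one_pow, sub_self] at hfrob
      have := pow_eq_zero_iff (n := p) hp.1.ne_zero |>.mp hfrob
      exact sub_eq_zero.mp this
    have : p ∣ 1 := hξ.dvd_of_pow_eq_one 1 (by rw [hxi1, one_pow])
    exact absurd (Nat.le_of_dvd one_pos this) (by omega)
  -- Work in the fraction field K where the ghost map is bijective
  let K := FractionRing k
  have hinj : Function.Injective (algebraMap k K) := IsFractionRing.injective k K
  have hpK : (p : K) ≠ 0 := by
    rw [show ((p : ℕ) : K) = algebraMap k K (p : k) by push_cast; ring]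
    exact fun h => hpk (hinj (by rw [h, map_zero]))
  haveI : Invertible (p : K) := invertibleOfNonzero hpK
  apply WittVector.map_injective (algebraMap k K) hinj
  apply (WittVector.ghostMap.bijective_of_invertible p K).injective
  funext n
  -- Reduce to ghost components over k
  have key : ∀ n : ℕ,
      WittVector.ghostComponent n (∑ i ∈ Finset.range p,
        N (WittVector.teichmuller p ξ ^ i * a)) =
      WittVector.ghostComponent n (WittVector.verschiebung (a ^ p)) := by
    intro n
    rw [map_sum]
    cases n with
    | zero =>
      rw [WittVector.ghostComponent_zero_verschiebung]
      calc ∑ i ∈ Finset.range p,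
            WittVector.ghostComponent 0 (N (WittVector.teichmuller p ξ ^ i * a))
          = ∑ i ∈ Finset.range p, ξ ^ i * WittVector.ghostComponent 0 a := by
            refine Finset.sum_congr rfl fun i _ => ?_
            rw [hN0, map_mul, map_pow, WittVector.ghostComponent_teichmuller]
            ring_nf
        _ = (∑ i ∈ Finset.range p, ξ ^ i) * WittVector.ghostComponent 0 a := by
            rw [Finset.sum_mul]
        _ = 0 := by rw [hξ.geom_sum_eq_zero hp1, zero_mul]
    | succ m =>
      rw [WittVector.ghostComponent_verschiebung, map_pow]
      calc ∑ i ∈ Finset.range p,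
            WittVector.ghostComponent (m + 1) (N (WittVector.teichmuller p ξ ^ i * a))
          = ∑ _i ∈ Finset.range p, WittVector.ghostComponent m a ^ p := by
            refine Finset.sum_congr rfl fun i _ => ?_
            rw [hNS, map_mul, map_pow, WittVector.ghostComponent_teichmuller]
            rw [mul_pow, ← pow_mul, ← pow_mul]
            have h1 : ξ ^ (p ^ m * (i * p)) = (ξ ^ p) ^ (p ^ m * i) := by
              rw [← pow_mul]; congr 1; ring
            rw [h1, hξ.pow_eq_one, one_pow, one_mul]
        _ = p * WittVector.ghostComponent m a ^ p := by
            rw [Finset.sum_const, Finset.card_range, nsmul_eq_mul]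
  simp only [WittVector.ghostMap_apply, ghostComponent_map_aux, key]
end

section
/- Let k be a commutative ring and d₁, d₂ positive integers. For every sequence x : ℕ+ → k, N̂_{d₁}(N̂_{d₂}(x)) = N̂_{d₁·d₂}(x); that is, for every t ∈ ℕ+, N̂_{d₁}(N̂_{d₂}(x))(t) = x(t/g)^g where g = gcd(d₁·d₂, t). In particular the composite N̂_{d₁} ∘ N̂_{d₂} depends only on the product d₁·d₂. -/
variable {k : Type*} [CommRing k]

def ghostNorm (d : ℕ+) (x : ℕ+ → k) : ℕ+ → k :=
  fun t => x (PNat.divExact t (PNat.gcd d t)) ^ ((PNat.gcd d t : ℕ))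

def ghostFrobenius (d : ℕ+) (x : ℕ+ → k) : ℕ+ → k :=
  fun t => x (d * t)

def ghostVerschiebung (d : ℕ+) (x : ℕ+ → k) : ℕ+ → k :=
  fun t => if (d : ℕ) ∣ (t : ℕ) then (d : ℕ) • x (PNat.divExact t d) else 0

private lemma coe_divExact {m n : ℕ+} (h : n ∣ m) : ((PNat.divExact m n : ℕ+) : ℕ) = (m : ℕ) / (n : ℕ) := by
  have := PNat.mul_div_exact h
  have h2 : (n : ℕ) * (PNat.divExact m n : ℕ) = (m : ℕ) := by exact_mod_cast congrArg (PNat.val) this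
  exact (Nat.div_eq_of_eq_mul_left n.pos (by rw [mul_comm] at h2; exact h2.symm)).symm

private lemma nat_gcd_mul (a b t : ℕ) :
    Nat.gcd (a * b) t = Nat.gcd a t * Nat.gcd b (t / Nat.gcd a t) := by
  set g := Nat.gcd a t with hgdef
  have hg : g ∣ t := Nat.gcd_dvd_right a t
  have h1 : Nat.gcd b (t / g) * g = Nat.gcd (b * g) t := by
    conv_rhs => rw [← Nat.div_mul_cancel hg]
    rw [Nat.gcd_mul_right]
  have h2 : Nat.gcd (b * g) t = Nat.gcd (a * b) t := by
    apply Nat.dvd_antisymm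
    · exact Nat.dvd_gcd
        ((Nat.gcd_dvd_left _ _).trans (by rw [mul_comm a b]; exact mul_dvd_mul_left b (Nat.gcd_dvd_left a t)))
        (Nat.gcd_dvd_right _ _)
    · refine Nat.dvd_gcd ?_ (Nat.gcd_dvd_right _ _)
      have : Nat.gcd (a * b) t ∣ Nat.gcd (a * b) (t * b) :=
        Nat.dvd_gcd (Nat.gcd_dvd_left _ _) ((Nat.gcd_dvd_right _ _).trans (dvd_mul_right t b))
      rwa [Nat.gcd_mul_right, ← hgdef, mul_comm g b] at this
  rw [← h2, ← h1, mul_comm]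

/-- The ghost norm is multiplicative in the index: `N̂_{d₁} ∘ N̂_{d₂} = N̂_{d₁·d₂}`,
so the composite depends only on the product `d₁ · d₂`. -/
theorem ghostNorm_ghostNorm (k : Type*) [CommRing k] (d₁ d₂ : ℕ+) (x : ℕ+ → k) :
    ghostNorm d₁ (ghostNorm d₂ x) = ghostNorm (d₁ * d₂) x := by
  funext t
  simp only [ghostNorm]
  set g₁ := PNat.gcd d₁ t with hg₁
  set s := PNat.divExact t g₁ with hs
  set g₂ := PNat.gcd d₂ s with hg₂
  have hg₁t : g₁ ∣ t := PNat.gcd_dvd_right d₁ t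
  have hg₂s : g₂ ∣ s := PNat.gcd_dvd_right d₂ s
  have hst : g₁ * s = t := PNat.mul_div_exact hg₁t
  have hsn : (s : ℕ) = (t : ℕ) / (g₁ : ℕ) := coe_divExact hg₁t
  -- key gcd identity
  have hgcd : (PNat.gcd (d₁ * d₂) t : ℕ) = (g₁ : ℕ) * (g₂ : ℕ) := by
    rw [PNat.gcd_coe, PNat.mul_coe, nat_gcd_mul, ← PNat.gcd_coe, ← hg₁, ← hsn, ← PNat.gcd_coe, ← hg₂]
  have hgcd' : PNat.gcd (d₁ * d₂) t = g₁ * g₂ := by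
    apply PNat.coe_injective
    rw [hgcd, PNat.mul_coe]
  have hdvd : g₁ * g₂ ∣ t := by
    rw [← hst]; exact mul_dvd_mul_left g₁ hg₂s
  have harg : PNat.divExact s g₂ = PNat.divExact t (PNat.gcd (d₁ * d₂) t) := by
    apply PNat.coe_injective
    rw [coe_divExact hg₂s, hgcd', coe_divExact hdvd, hsn, PNat.mul_coe, Nat.div_div_eq_div_mul]
  rw [harg, hgcd, ← pow_mul, mul_comm ((g₂:ℕ)) ((g₁:ℕ))]
end
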